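/- Let K be a field. The Nagata automorphism ν = (x−2y(y²+xz)−z(y²+xz)², y+z(y²+xz)) of K[z][x,y] (which fixes z) is z-wild: it does not lie in the subgroup of z-automorphisms generated by the z-affine and the z-triangular automorphisms. -/

import Mathlib

noncomputable section

open MvPolynomial

variable (K : Type*) [Field K]

/-- `z`-affine automorphisms of `K[x,y,z]`: they fix `z` and are affine in `x,y` with
coefficients `αᵢⱼ ∈ K` and free terms in `K[z]`. -/
def IsZAffine (φ : MvPolynomial (Fin 3) K ≃ₐ[K] MvPolynomial (Fin 3) K) : Prop :=
  φ (X 2) = X 2 ∧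
  ∃ (a : Matrix (Fin 2) (Fin 2) K) (b : Fin 2 → Polynomial K),
    IsUnit a.det ∧
    φ (X 0) = C (a 0 0) * X 0 + C (a 1 0) * X 1 + Polynomial.aeval (X 2) (b 0) ∧
    φ (X 1) = C (a 0 1) * X 0 + C (a 1 1) * X 1 + Polynomial.aeval (X 2) (b 1)

/-- `z`-triangular automorphisms of `K[x,y,z]`. -/
def IsZTriangular (φ : MvPolynomial (Fin 3) K ≃ₐ[K] MvPolynomial (Fin 3) K) : Prop :=
  φ (X 2) = X 2 ∧
  ∃ (α₁ α₂ : Kˣ) (p₁ : MvPolynomial (Fin 2) K) (p₂ : Polynomial K),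
    φ (X 0) = C (α₁ : K) * X 0 + aeval ![X 1, X 2] p₁ ∧
    φ (X 1) = C (α₂ : K) * X 1 + Polynomial.aeval (X 2) p₂

/-- The subgroup of `z`-tame automorphisms of `K[x,y,z]`. -/
def ZTame : Subgroup (MvPolynomial (Fin 3) K ≃ₐ[K] MvPolynomial (Fin 3) K) :=
  Subgroup.closure {φ | IsZAffine K φ ∨ IsZTriangular K φ}

namespace NagataAux

abbrev P3 := MvPolynomial (Fin 3) K

def toZ : Polynomial K →ₐ[K] P3 K := Polynomial.aeval (X 2)

variable {K}

@[simp] lemma toZ_X : toZ K Polynomial.X = X 2 := by simp [toZ]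
@[simp] lemma toZ_C (a : K) : toZ K (Polynomial.C a) = C a := by simp [toZ, algebraMap_eq]

def EvT (g : P3 K) (q : Polynomial (Polynomial K)) : P3 K :=
  Polynomial.eval₂ (toZ K).toRingHom g q

lemma comp_toZ (σ : P3 K →ₐ[K] P3 K) (h : σ (X 2) = X 2) (r : Polynomial K) :
    σ (toZ K r) = toZ K r := by
  have : σ.comp (toZ K) = toZ K := by
    apply Polynomial.algHom_ext
    simp [toZ, h]
  exact DFunLike.congr_fun this r

lemma map_EvT (σ : P3 K →ₐ[K] P3 K) (h : σ (X 2) = X 2) (g : P3 K)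
    (q : Polynomial (Polynomial K)) :
    σ (EvT g q) = EvT (σ g) q := by
  unfold EvT
  rw [show σ (Polynomial.eval₂ (toZ K).toRingHom g q) =
      σ.toRingHom (Polynomial.eval₂ (toZ K).toRingHom g q) from rfl,
    Polynomial.hom_eval₂]
  congr 1
  exact RingHom.ext fun r => comp_toZ σ h r

lemma map_C (φ : P3 K ≃ₐ[K] P3 K) (a : K) : φ (C a) = C a := by
  simpa [algebraMap_eq] using φ.commutes a

lemma EvT_linear (g : P3 K) (c d : Polynomial K) :
    EvT g (Polynomial.C c * Polynomial.X + Polynomial.C d) = toZ K c * g + toZ K d := by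
  simp [EvT]

lemma comp_toZ' (φ : P3 K ≃ₐ[K] P3 K) (h : φ (X 2) = X 2) (r : Polynomial K) :
    φ (toZ K r) = toZ K r := comp_toZ (φ : P3 K →ₐ[K] P3 K) h r

lemma map_EvT' (φ : P3 K ≃ₐ[K] P3 K) (h : φ (X 2) = X 2) (g : P3 K)
    (q : Polynomial (Polynomial K)) : φ (EvT g q) = EvT (φ g) q :=
  map_EvT (φ : P3 K →ₐ[K] P3 K) h g q

@[simp] lemma EvT_add (g : P3 K) (q r : Polynomial (Polynomial K)) :
    EvT g (q + r) = EvT g q + EvT g r := Polynomial.eval₂_add _ _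

@[simp] lemma EvT_mul (g : P3 K) (q r : Polynomial (Polynomial K)) :
    EvT g (q * r) = EvT g q * EvT g r := Polynomial.eval₂_mul _ _

@[simp] lemma EvT_CP (g : P3 K) (a : Polynomial K) :
    EvT g (Polynomial.C a) = toZ K a := Polynomial.eval₂_C _ _

@[simp] lemma EvT_XP (g : P3 K) : EvT g Polynomial.X = g := Polynomial.eval₂_X _ _

@[simp] lemma EvT_zero (g : P3 K) : EvT g 0 = 0 := Polynomial.eval₂_zero _ _

@[simp] lemma EvT_one (g : P3 K) : EvT g 1 = 1 := Polynomial.eval₂_one _ _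

lemma EvT_comp (g : P3 K) (q s : Polynomial (Polynomial K)) :
    EvT g (q.comp s) = EvT (EvT g s) q := Polynomial.eval₂_comp _

variable (K)

/-- affine `z`-automorphisms with matrix entries in `K[z]` whose determinant is in `K∖{0}`. -/
def SetA : Set (P3 K ≃ₐ[K] P3 K) :=
  {φ | φ (X 2) = X 2 ∧ ∃ q11 q12 q13 q21 q22 q23 : Polynomial K, ∃ k : K,
    k ≠ 0 ∧ q11 * q22 - q12 * q21 = Polynomial.C k ∧
    φ (X 0) = toZ K q11 * X 0 + toZ K q12 * X 1 + toZ K q13 ∧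
    φ (X 1) = toZ K q21 * X 0 + toZ K q22 * X 1 + toZ K q23}

/-- triangular `z`-automorphisms with coefficients in `K[z]` and diagonal in `K∖{0}`. -/
def SetT : Set (P3 K ≃ₐ[K] P3 K) :=
  {φ | φ (X 2) = X 2 ∧ ∃ (a b : K) (q : Polynomial (Polynomial K)) (r : Polynomial K),
    a ≠ 0 ∧ b ≠ 0 ∧
    φ (X 0) = C a * X 0 + EvT (X 1) q ∧
    φ (X 1) = C b * X 1 + toZ K r}

variable {K}

lemma one_mem_A : (1 : P3 K ≃ₐ[K] P3 K) ∈ SetA K := by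
  refine ⟨rfl, 1, 0, 0, 0, 1, 0, 1, one_ne_zero, by ring_nf; simp, ?_, ?_⟩ <;>
    simp [AlgEquiv.one_apply]

lemma one_mem_T : (1 : P3 K ≃ₐ[K] P3 K) ∈ SetT K := by
  refine ⟨rfl, 1, 1, 0, 0, one_ne_zero, one_ne_zero, ?_, ?_⟩ <;>
    simp [AlgEquiv.one_apply]

lemma mul_mem_A {φ ψ : P3 K ≃ₐ[K] P3 K} (hφ : φ ∈ SetA K) (hψ : ψ ∈ SetA K) :
    φ * ψ ∈ SetA K := by
  obtain ⟨h2, p11, p12, p13, p21, p22, p23, k, hk, hdet, h0, h1⟩ := hφ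
  obtain ⟨h2', q11, q12, q13, q21, q22, q23, k', hk', hdet', h0', h1'⟩ := hψ
  refine ⟨by simp [AlgEquiv.mul_apply, h2', h2],
    q11 * p11 + q12 * p21, q11 * p12 + q12 * p22, q11 * p13 + q12 * p23 + q13,
    q21 * p11 + q22 * p21, q21 * p12 + q22 * p22, q21 * p13 + q22 * p23 + q23,
    k * k', mul_ne_zero hk hk', by rw [Polynomial.C_mul, ← hdet, ← hdet']; ring, ?_, ?_⟩
  · rw [AlgEquiv.mul_apply, h0', map_add, map_add, map_mul, map_mul,
      comp_toZ' φ h2, comp_toZ' φ h2, comp_toZ' φ h2, h0, h1]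
    simp only [map_add, map_mul]
    ring
  · rw [AlgEquiv.mul_apply, h1', map_add, map_add, map_mul, map_mul,
      comp_toZ' φ h2, comp_toZ' φ h2, comp_toZ' φ h2, h0, h1]
    simp only [map_add, map_mul]
    ring

lemma aut_inv (φ : P3 K ≃ₐ[K] P3 K) : φ⁻¹ = φ.symm := rfl

lemma inv_mem_A {φ : P3 K ≃ₐ[K] P3 K} (hφ : φ ∈ SetA K) : φ⁻¹ ∈ SetA K := by
  obtain ⟨h2, q11, q12, q13, q21, q22, q23, k, hk, hdet, h0, h1⟩ := hφ
  have h2' : φ⁻¹ (X 2) = X 2 := by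
    rw [aut_inv]; exact (AlgEquiv.symm_apply_eq φ).mpr h2.symm
  set r11 : Polynomial K := Polynomial.C k⁻¹ * q22 with hr11
  set r12 : Polynomial K := -(Polynomial.C k⁻¹ * q12) with hr12
  set r21 : Polynomial K := -(Polynomial.C k⁻¹ * q21) with hr21
  set r22 : Polynomial K := Polynomial.C k⁻¹ * q11 with hr22
  set t1 : Polynomial K := -(r11 * q13 + r12 * q23) with ht1
  set t2 : Polynomial K := -(r21 * q13 + r22 * q23) with ht2
  have key : ∀ a b c : Polynomial K, a * q11 + b * q21 = 1 → a * q12 + b * q22 = 0 →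
      a * q13 + b * q23 + c = 0 →
      φ (toZ K a * X 0 + toZ K b * X 1 + toZ K c) = X 0 := by
    intro a b c e1 e2 e3
    rw [map_add, map_add, map_mul, map_mul, comp_toZ' φ h2, comp_toZ' φ h2, comp_toZ' φ h2,
      h0, h1]
    have expand : toZ K a * (toZ K q11 * X 0 + toZ K q12 * X 1 + toZ K q13) +
        toZ K b * (toZ K q21 * X 0 + toZ K q22 * X 1 + toZ K q23) + toZ K c =
        toZ K (a * q11 + b * q21) * X 0 + toZ K (a * q12 + b * q22) * X 1 +
          toZ K (a * q13 + b * q23 + c) := by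
      simp only [map_add, map_mul]; ring
    rw [expand, e1, e2, e3]
    simp
  have key' : ∀ a b c : Polynomial K, a * q11 + b * q21 = 0 → a * q12 + b * q22 = 1 →
      a * q13 + b * q23 + c = 0 →
      φ (toZ K a * X 0 + toZ K b * X 1 + toZ K c) = X 1 := by
    intro a b c e1 e2 e3
    rw [map_add, map_add, map_mul, map_mul, comp_toZ' φ h2, comp_toZ' φ h2, comp_toZ' φ h2,
      h0, h1]
    have expand : toZ K a * (toZ K q11 * X 0 + toZ K q12 * X 1 + toZ K q13) +
        toZ K b * (toZ K q21 * X 0 + toZ K q22 * X 1 + toZ K q23) + toZ K c =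
        toZ K (a * q11 + b * q21) * X 0 + toZ K (a * q12 + b * q22) * X 1 +
          toZ K (a * q13 + b * q23 + c) := by
      simp only [map_add, map_mul]; ring
    rw [expand, e1, e2, e3]
    simp
  have hCk : (Polynomial.C k⁻¹) * (q11 * q22 - q12 * q21) = 1 := by
    rw [hdet, ← Polynomial.C_mul, inv_mul_cancel₀ hk, Polynomial.C_1]
  refine ⟨h2', r11, r12, t1, r21, r22, t2, k⁻¹, inv_ne_zero hk, ?_, ?_, ?_⟩
  · rw [hr11, hr12, hr21, hr22]
    have : Polynomial.C k⁻¹ * q22 * (Polynomial.C k⁻¹ * q11) -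
        -(Polynomial.C k⁻¹ * q12) * -(Polynomial.C k⁻¹ * q21) =
        Polynomial.C k⁻¹ * (Polynomial.C k⁻¹ * (q11 * q22 - q12 * q21)) := by ring
    rw [this, hCk, mul_one]
  · have := key r11 r12 t1 ?_ ?_ ?_
    · rw [aut_inv]; exact (AlgEquiv.symm_apply_eq φ).mpr this.symm
    · rw [hr11, hr12]; rw [← hCk]; ring
    · rw [hr11, hr12]; ring
    · rw [ht1]; ring
  · have := key' r21 r22 t2 ?_ ?_ ?_
    · rw [aut_inv]; exact (AlgEquiv.symm_apply_eq φ).mpr this.symm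
    · rw [hr21, hr22]; ring
    · rw [hr21, hr22]; rw [← hCk]; ring
    · rw [ht2]; ring

lemma mul_mem_T {φ ψ : P3 K ≃ₐ[K] P3 K} (hφ : φ ∈ SetT K) (hψ : ψ ∈ SetT K) :
    φ * ψ ∈ SetT K := by
  obtain ⟨h2, a1, b1, q1, r1, ha1, hb1, h0, h1⟩ := hφ
  obtain ⟨h2', a2, b2, q2, r2, ha2, hb2, h0', h1'⟩ := hψ
  set s : Polynomial (Polynomial K) :=
    Polynomial.C (Polynomial.C b1) * Polynomial.X + Polynomial.C r1 with hs
  have hφX1 : φ (X 1) = EvT (X 1) s := by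
    rw [hs]; simp [h1]
  refine ⟨by simp [AlgEquiv.mul_apply, h2', h2], a1 * a2, b1 * b2,
    Polynomial.C (Polynomial.C a2) * q1 + q2.comp s,
    Polynomial.C b2 * r1 + r2, mul_ne_zero ha1 ha2, mul_ne_zero hb1 hb2, ?_, ?_⟩
  · rw [AlgEquiv.mul_apply, h0', map_add, map_mul, map_C φ a2,
      map_EvT' φ h2, h0, hφX1, ← EvT_comp]
    simp only [EvT_add, EvT_mul, EvT_CP, toZ_C, map_mul]
    ring
  · rw [AlgEquiv.mul_apply, h1', map_add, map_mul, map_C φ b2,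
      comp_toZ' φ h2 r2, h1]
    simp only [map_add, map_mul, toZ_C]
    ring

lemma inv_mem_T {φ : P3 K ≃ₐ[K] P3 K} (hφ : φ ∈ SetT K) : φ⁻¹ ∈ SetT K := by
  obtain ⟨h2, a, b, q, r, ha, hb, h0, h1⟩ := hφ
  have h2' : φ⁻¹ (X 2) = X 2 := by
    rw [aut_inv]; exact (AlgEquiv.symm_apply_eq φ).mpr h2.symm
  have hbb : (C b⁻¹ : P3 K) * C b = 1 := by
    rw [← map_mul, inv_mul_cancel₀ hb, map_one]
  have haa : (C a⁻¹ : P3 K) * C a = 1 := by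
    rw [← map_mul, inv_mul_cancel₀ ha, map_one]
  set s : Polynomial (Polynomial K) :=
    Polynomial.C (Polynomial.C b⁻¹) * Polynomial.X +
      Polynomial.C (-(Polynomial.C b⁻¹ * r)) with hs
  have hEs : EvT (φ (X 1)) s = X 1 := by
    rw [hs, EvT_linear, h1]
    simp only [toZ_C, map_neg, map_mul]
    calc (C b⁻¹ : P3 K) * (C b * X 1 + toZ K r) + -(C b⁻¹ * toZ K r)
        = (C b⁻¹ * C b) * X 1 := by ring
      _ = X 1 := by rw [hbb, one_mul]
  have hφE1 : φ (EvT (X 1) s) = X 1 := by rw [map_EvT' φ h2, hEs]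
  have hinv1 : φ⁻¹ (X 1) = EvT (X 1) s := by
    rw [aut_inv]; exact (AlgEquiv.symm_apply_eq φ).mpr hφE1.symm
  set q' : Polynomial (Polynomial K) :=
    Polynomial.C (Polynomial.C (-(a⁻¹ : K))) * (q.comp s) with hq'
  have hφE0 : φ (C a⁻¹ * X 0 + EvT (X 1) q') = X 0 := by
    rw [map_add, map_mul, map_C φ a⁻¹, map_EvT' φ h2, hq', EvT_mul, EvT_CP, toZ_C,
      EvT_comp, hEs, h0]
    simp only [map_neg]
    calc (C a⁻¹ : P3 K) * (C a * X 0 + EvT (X 1) q) + -(C a⁻¹) * EvT (X 1) q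
        = (C a⁻¹ * C a) * X 0 := by ring
      _ = X 0 := by rw [haa, one_mul]
  have hinv0 : φ⁻¹ (X 0) = C a⁻¹ * X 0 + EvT (X 1) q' := by
    rw [aut_inv]; exact (AlgEquiv.symm_apply_eq φ).mpr hφE0.symm
  have hE1' : EvT (X 1 : P3 K) s = C b⁻¹ * X 1 + toZ K (-(Polynomial.C b⁻¹ * r)) := by
    rw [hs, EvT_linear]; simp
  exact ⟨h2', a⁻¹, b⁻¹, q', -(Polynomial.C b⁻¹ * r), inv_ne_zero ha, inv_ne_zero hb,
    hinv0, by rw [hinv1, hE1']⟩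

/-- a retraction of `toZ`. -/
def backZ : P3 K →ₐ[K] Polynomial K := aeval ![0, 0, Polynomial.X]

lemma backZ_toZ (r : Polynomial K) : backZ (toZ K r) = r := by
  have : (backZ.comp (toZ K) : Polynomial K →ₐ[K] Polynomial K) = AlgHom.id K _ := by
    apply Polynomial.algHom_ext
    simp [backZ, toZ]
  exact DFunLike.congr_fun this r

lemma toZ_injective : Function.Injective (⇑(toZ K) : Polynomial K → P3 K) := by
  intro r s h
  have := congrArg (backZ (K := K)) h
  rwa [backZ_toZ, backZ_toZ] at this

lemma toZ_ne_zero {r : Polynomial K} (h : r ≠ 0) : toZ K r ≠ 0 := by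
  intro h0
  exact h (toZ_injective (by rw [h0, map_zero]))

/-- units extraction: if `q11 * q22 = C k`, `k ≠ 0`, then both factors are constants. -/
lemma eq_C_of_mul_eq_C {q1 q2 : Polynomial K} {k : K} (hk : k ≠ 0)
    (h : q1 * q2 = Polynomial.C k) :
    ∃ u v : K, u ≠ 0 ∧ v ≠ 0 ∧ q1 = Polynomial.C u ∧ q2 = Polynomial.C v := by
  have h1 : IsUnit q1 := isUnit_of_mul_isUnit_left (h ▸ Polynomial.isUnit_C.mpr hk.isUnit)
  have h2 : IsUnit q2 := isUnit_of_mul_isUnit_right (h ▸ Polynomial.isUnit_C.mpr hk.isUnit)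
  obtain ⟨u, hu, hq1⟩ := Polynomial.isUnit_iff.mp h1
  obtain ⟨v, hv, hq2⟩ := Polynomial.isUnit_iff.mp h2
  exact ⟨u, v, hu.ne_zero, hv.ne_zero, hq1.symm, hq2.symm⟩

/-- an affine automorphism whose `(2,1)` entry vanishes is triangular. -/
lemma mem_T_of_A_q21_zero {φ : P3 K ≃ₐ[K] P3 K}
    {q11 q12 q13 q22 q23 : Polynomial K} {k : K} (hk : k ≠ 0)
    (h2 : φ (X 2) = X 2)
    (hdet : q11 * q22 - q12 * 0 = Polynomial.C k)
    (h0 : φ (X 0) = toZ K q11 * X 0 + toZ K q12 * X 1 + toZ K q13)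
    (h1 : φ (X 1) = toZ K 0 * X 0 + toZ K q22 * X 1 + toZ K q23) :
    φ ∈ SetT K := by
  rw [mul_zero, sub_zero] at hdet
  obtain ⟨u, v, hu, hv, hq11, hq22⟩ := eq_C_of_mul_eq_C hk hdet
  refine ⟨h2, u, v, Polynomial.C q12 * Polynomial.X + Polynomial.C q13, q23, hu, hv, ?_, ?_⟩
  · rw [h0, hq11, EvT_linear, toZ_C]; ring
  · rw [h1, hq22, toZ_C]; simp

/-- a triangular automorphism of `y`-degree at most 1 is affine. -/
lemma mem_A_of_T_deg_le_one {φ : P3 K ≃ₐ[K] P3 K}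
    {a b : K} {q : Polynomial (Polynomial K)} {r : Polynomial K}
    (ha : a ≠ 0) (hb : b ≠ 0) (h2 : φ (X 2) = X 2)
    (h0 : φ (X 0) = C a * X 0 + EvT (X 1) q)
    (h1 : φ (X 1) = C b * X 1 + toZ K r)
    (hdeg : q.natDegree ≤ 1) :
    φ ∈ SetA K := by
  have hq := Polynomial.eq_X_add_C_of_natDegree_le_one hdeg
  refine ⟨h2, Polynomial.C a, q.coeff 1, q.coeff 0, 0, Polynomial.C b, r,
    a * b, mul_ne_zero ha hb, by rw [← Polynomial.C_mul]; ring, ?_, ?_⟩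
  · rw [h0]
    conv_lhs => rw [hq]
    rw [EvT_add, EvT_mul, EvT_CP, EvT_CP, EvT_XP, toZ_C]
    ring
  · rw [h1, toZ_C]; simp

/-- homogenization in the `x,y`-grading: `x ↦ x t`, `y ↦ y t`, `z ↦ z`. -/
def HH : P3 K →ₐ[K] Polynomial (P3 K) :=
  aeval ![Polynomial.C (X 0) * Polynomial.X, Polynomial.C (X 1) * Polynomial.X,
    Polynomial.C (X 2)]

@[simp] lemma HH_X0 : HH (X 0 : P3 K) = Polynomial.C (X 0) * Polynomial.X := by
  simp [HH]

@[simp] lemma HH_X1 : HH (X 1 : P3 K) = Polynomial.C (X 1) * Polynomial.X := by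
  simp [HH]

@[simp] lemma HH_X2 : HH (X 2 : P3 K) = Polynomial.C (X 2) := by
  simp [HH]

@[simp] lemma HH_toZ (r : Polynomial K) : HH (toZ K r) = Polynomial.C (toZ K r) := by
  have h : (HH.comp (toZ K) : Polynomial K →ₐ[K] Polynomial (P3 K)) =
      (Polynomial.CAlgHom (R := K)).comp (toZ K) := by
    apply Polynomial.algHom_ext
    simp [Polynomial.CAlgHom]
  exact DFunLike.congr_fun h r

@[simp] lemma HH_C (a : K) : HH (C a : P3 K) = Polynomial.C (C a) := by
  have h := HH_toZ (K := K) (Polynomial.C a)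
  rw [toZ_C] at h
  exact h

lemma HH_EvT (g : P3 K) (q : Polynomial (Polynomial K)) :
    HH (EvT g q) = (q.map (toZ K).toRingHom).comp (HH g) := by
  unfold EvT
  rw [show HH (Polynomial.eval₂ (toZ K).toRingHom g q) =
      HH.toRingHom (Polynomial.eval₂ (toZ K).toRingHom g q) from rfl,
    Polynomial.hom_eval₂,
    show (q.map (toZ K).toRingHom).comp (HH g) =
      Polynomial.eval₂ Polynomial.C (HH g) (q.map (toZ K).toRingHom) from rfl,
    Polynomial.eval₂_map]
  congr 1
  exact RingHom.ext fun r => HH_toZ r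

lemma dominant_add {F G : Polynomial (P3 K)} (h : G.natDegree < F.natDegree) :
    (F + G).natDegree = F.natDegree ∧ (F + G).leadingCoeff = F.leadingCoeff := by
  constructor
  · exact Polynomial.natDegree_add_eq_left_of_natDegree_lt h
  · rw [add_comm]
    exact Polynomial.leadingCoeff_add_of_degree_lt (Polynomial.degree_lt_degree h)

/-- coefficient-extraction maps. -/
def piX (i : Fin 3) : P3 K →ₐ[K] Polynomial K :=
  aeval (fun j => if j = i then 1 else if j = 2 then Polynomial.X else 0)

lemma piX_toZ (i : Fin 3) (hi : i ≠ 2) (r : Polynomial K) : piX i (toZ K r) = r := by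
  have : ((piX i).comp (toZ K) : Polynomial K →ₐ[K] Polynomial K) = AlgHom.id K _ := by
    apply Polynomial.algHom_ext
    simp [piX, toZ, if_neg (show ¬(2 : Fin 3) = i from fun h => hi h.symm)]
  exact DFunLike.congr_fun this r

lemma lin_indep_X01 {p q : Polynomial K} (h : toZ K p * X 0 + toZ K q * X 1 = 0) :
    p = 0 ∧ q = 0 := by
  have e00 : piX (K := K) 0 (X 0) = 1 := by simp [piX]
  have e01 : piX (K := K) 0 (X 1) = 0 := by simp [piX]
  have e10 : piX (K := K) 1 (X 0) = 0 := by simp [piX]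
  have e11 : piX (K := K) 1 (X 1) = 1 := by simp [piX]
  constructor
  · have h0 := congrArg (piX 0) h
    rw [map_add, map_mul, map_mul, piX_toZ 0 (by decide), piX_toZ 0 (by decide),
      e00, e01, map_zero] at h0
    simpa using h0
  · have h1 := congrArg (piX 1) h
    rw [map_add, map_mul, map_mul, piX_toZ 1 (by decide), piX_toZ 1 (by decide),
      e10, e11, map_zero] at h1
    simpa using h1

lemma HH_affine (p q r : Polynomial K) :
    HH (toZ K p * X 0 + toZ K q * X 1 + toZ K r) =
      Polynomial.C (toZ K p * X 0 + toZ K q * X 1) * Polynomial.X +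
        Polynomial.C (toZ K r) := by
  simp only [map_add, map_mul, HH_toZ, HH_X0, HH_X1, Polynomial.C_add, Polynomial.C_mul]
  ring

lemma deg_lead_EvT {g : P3 K} {q : Polynomial (Polynomial K)} (hq : q ≠ 0)
    (hg : (HH g).natDegree ≠ 0) :
    (HH (EvT g q)).natDegree = q.natDegree * (HH g).natDegree ∧
      (HH (EvT g q)).leadingCoeff =
        toZ K q.leadingCoeff * (HH g).leadingCoeff ^ q.natDegree := by
  have hmapdeg : (q.map (toZ K).toRingHom).natDegree = q.natDegree :=
    Polynomial.natDegree_map_eq_of_injective toZ_injective q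
  have hmaplc : (q.map (toZ K).toRingHom).leadingCoeff = toZ K q.leadingCoeff :=
    Polynomial.leadingCoeff_map_of_injective toZ_injective q
  constructor
  · rw [HH_EvT, Polynomial.natDegree_comp, hmapdeg]
  · rw [HH_EvT, Polynomial.leadingCoeff_comp hg, hmaplc, hmapdeg]

/-- the key state: the image of `x` is dominated by a power of the image of `y`,
with "integral" coefficient. -/
def TState (ψ : P3 K ≃ₐ[K] P3 K) : Prop :=
  ψ (X 2) = X 2 ∧ ∃ (e d : ℕ) (c : Polynomial K), 1 ≤ e ∧ 2 ≤ d ∧ c ≠ 0 ∧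
    (HH (ψ (X 1))).natDegree = e ∧ (HH (ψ (X 0))).natDegree = d * e ∧
    (HH (ψ (X 0))).leadingCoeff = toZ K c * (HH (ψ (X 1))).leadingCoeff ^ d

lemma C3_ne_zero {b : K} (hb : b ≠ 0) : (C b : P3 K) ≠ 0 := by
  simpa using hb

lemma stepT {σ t : P3 K ≃ₐ[K] P3 K} (hσ2 : σ (X 2) = X 2)
    {a b : K} {q : Polynomial (Polynomial K)} {r : Polynomial K}
    (ha : a ≠ 0) (hb : b ≠ 0) (ht2 : t (X 2) = X 2)
    (ht0 : t (X 0) = C a * X 0 + EvT (X 1) q)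
    (ht1 : t (X 1) = C b * X 1 + toZ K r)
    (hdq : 2 ≤ q.natDegree)
    (hE : 1 ≤ (HH (σ (X 1))).natDegree)
    (hfE : (HH (σ (X 0))).natDegree ≤ (HH (σ (X 1))).natDegree) :
    TState (σ * t) := by
  have himg0 : (σ * t) (X 0) = EvT (σ (X 1)) q + C a * σ (X 0) := by
    rw [AlgEquiv.mul_apply, ht0, map_add, map_mul, map_C, map_EvT' σ hσ2]; ring
  have himg1 : (σ * t) (X 1) = C b * σ (X 1) + toZ K r := by
    rw [AlgEquiv.mul_apply, ht1, map_add, map_mul, map_C, comp_toZ' σ hσ2]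
  have hq0 : q ≠ 0 := fun h => by simp [h] at hdq
  have hEne : (HH (σ (X 1))).natDegree ≠ 0 := by omega
  obtain ⟨hdeg, hlc⟩ := deg_lead_EvT (g := σ (X 1)) hq0 hEne
  have hgne : HH (σ (X 1)) ≠ 0 := fun h => hEne (by rw [h]; simp)
  have hlcg : (HH (σ (X 1))).leadingCoeff ≠ 0 := Polynomial.leadingCoeff_ne_zero.mpr hgne
  have hlcq : q.leadingCoeff ≠ 0 := Polynomial.leadingCoeff_ne_zero.mpr hq0
  have hlt : (HH (C a * σ (X 0))).natDegree < (HH (EvT (σ (X 1)) q)).natDegree := by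
    rw [hdeg]
    calc (HH (C a * σ (X 0))).natDegree ≤ (HH (σ (X 0))).natDegree := by
          rw [map_mul, HH_C]; exact Polynomial.natDegree_C_mul_le _ _
      _ ≤ (HH (σ (X 1))).natDegree := hfE
      _ < q.natDegree * (HH (σ (X 1))).natDegree := by
          calc (HH (σ (X 1))).natDegree = 1 * (HH (σ (X 1))).natDegree := (one_mul _).symm
            _ < 2 * (HH (σ (X 1))).natDegree := by omega
            _ ≤ q.natDegree * (HH (σ (X 1))).natDegree := Nat.mul_le_mul_right _ hdq
  obtain ⟨hd2, hl2⟩ := dominant_add hlt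
  have hltg : (HH ((toZ K r : P3 K))).natDegree < (HH (C b * σ (X 1))).natDegree := by
    rw [HH_toZ, map_mul, HH_C, Polynomial.natDegree_C,
      Polynomial.natDegree_C_mul (by simpa using (C3_ne_zero hb))]
    omega
  obtain ⟨hd3, hl3⟩ := dominant_add hltg
  have hlcCb : (HH (C b * σ (X 1))).leadingCoeff =
      C b * (HH (σ (X 1))).leadingCoeff := by
    rw [map_mul, HH_C, Polynomial.leadingCoeff_mul, Polynomial.leadingCoeff_C]
  refine ⟨by rw [AlgEquiv.mul_apply, ht2, hσ2], (HH (σ (X 1))).natDegree, q.natDegree,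
    Polynomial.C ((b ^ q.natDegree)⁻¹) * q.leadingCoeff, hE, hdq, ?_, ?_, ?_, ?_⟩
  · exact mul_ne_zero (by simp [hb, pow_ne_zero]) hlcq
  · rw [himg1, map_add, hd3, map_mul, HH_C,
      Polynomial.natDegree_C_mul (by simpa using (C3_ne_zero hb))]
  · rw [himg0, map_add, hd2, hdeg]
  · rw [himg0, map_add, hl2, hlc, himg1, map_add, hl3, hlcCb]
    rw [map_mul, toZ_C, mul_pow, ← map_pow]
    symm
    have : (C ((b ^ q.natDegree)⁻¹) : P3 K) * C (b ^ q.natDegree) = 1 := by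
      rw [← map_mul, inv_mul_cancel₀ (pow_ne_zero _ hb), map_one]
    calc C ((b ^ q.natDegree)⁻¹) * toZ K q.leadingCoeff *
          (C (b ^ q.natDegree) * (HH (σ (X 1))).leadingCoeff ^ q.natDegree)
        = (C ((b ^ q.natDegree)⁻¹) * C (b ^ q.natDegree)) *
            (toZ K q.leadingCoeff * (HH (σ (X 1))).leadingCoeff ^ q.natDegree) := by ring
      _ = toZ K q.leadingCoeff * (HH (σ (X 1))).leadingCoeff ^ q.natDegree := by
          rw [this, one_mul]
  -- note: goal order may differ; adjust when compiling

lemma mul_image_affine {ψ a : P3 K ≃ₐ[K] P3 K} (hψ2 : ψ (X 2) = X 2)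
    {q1 q2 q3 : Polynomial K} (ha : a (X 0) = toZ K q1 * X 0 + toZ K q2 * X 1 + toZ K q3) :
    (ψ * a) (X 0) = toZ K q1 * ψ (X 0) + toZ K q2 * ψ (X 1) + toZ K q3 := by
  rw [AlgEquiv.mul_apply, ha, map_add, map_add, map_mul, map_mul,
    comp_toZ' ψ hψ2, comp_toZ' ψ hψ2, comp_toZ' ψ hψ2]

lemma mul_image_affine' {ψ a : P3 K ≃ₐ[K] P3 K} (hψ2 : ψ (X 2) = X 2)
    {q1 q2 q3 : Polynomial K} (ha : a (X 1) = toZ K q1 * X 0 + toZ K q2 * X 1 + toZ K q3) :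
    (ψ * a) (X 1) = toZ K q1 * ψ (X 0) + toZ K q2 * ψ (X 1) + toZ K q3 := by
  rw [AlgEquiv.mul_apply, ha, map_add, map_add, map_mul, map_mul,
    comp_toZ' ψ hψ2, comp_toZ' ψ hψ2, comp_toZ' ψ hψ2]

lemma affine_deg {φ : P3 K ≃ₐ[K] P3 K} (hA : φ ∈ SetA K) :
    (HH (φ (X 1))).natDegree = 1 ∧ (HH (φ (X 0))).natDegree ≤ 1 := by
  obtain ⟨h2, q11, q12, q13, q21, q22, q23, k, hk, hdet, h0, h1⟩ := hA
  have htop : toZ K q21 * (X 0 : P3 K) + toZ K q22 * X 1 ≠ 0 := by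
    intro h
    obtain ⟨hz1, hz2⟩ := lin_indep_X01 h
    rw [hz1, hz2] at hdet
    simp only [mul_zero, zero_mul, sub_zero] at hdet
    exact hk (by simpa using congrArg (fun p => Polynomial.coeff p 0) hdet.symm) |>.elim
  constructor
  · rw [h1, HH_affine, Polynomial.natDegree_linear htop]
  · rw [h0, HH_affine]
    exact Polynomial.natDegree_linear_le

/-- alternating reduced words ending with a proper triangular factor. -/
inductive IsW : (P3 K ≃ₐ[K] P3 K) → Prop
  | one : IsW 1
  | cons {ψ a t : P3 K ≃ₐ[K] P3 K} : IsW ψ → a ∈ SetA K → t ∈ SetT K → t ∉ SetA K →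
      (ψ = 1 ∨ a ∉ SetT K) → IsW (ψ * a * t)

attribute [nolint docBlame] IsW

lemma isW_fix2 {ψ : P3 K ≃ₐ[K] P3 K} (h : IsW ψ) : ψ (X 2) = X 2 := by
  induction h with
  | one => rfl
  | cons hW hA hT hTA hcnd ih =>
    rw [AlgEquiv.mul_apply, AlgEquiv.mul_apply, hT.1, hA.1, ih]

set_option maxHeartbeats 1600000 in
lemma tstate_of_isW {ψ : P3 K ≃ₐ[K] P3 K} (h : IsW ψ) : ψ = 1 ∨ TState ψ := by
  induction h with
  | one => exact Or.inl rfl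
  | @cons ψ a t hW hA hT hTA hcnd ih =>
    right
    obtain ⟨ha2, q11, q12, q13, q21, q22, q23, k, hk, hdet, ha0, ha1⟩ := hA
    obtain ⟨ht2, at_, bt, q, r, hat, hbt, ht0, ht1⟩ := hT
    have hdq : 2 ≤ q.natDegree := by
      by_contra hle
      push_neg at hle
      exact hTA (mem_A_of_T_deg_le_one hat hbt ht2 ht0 ht1 (by omega))
    have hψ2 : ψ (X 2) = X 2 := isW_fix2 hW
    have hσ2 : (ψ * a) (X 2) = X 2 := by
      rw [AlgEquiv.mul_apply, ha2, hψ2]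
    -- establish degree data for σ = ψ * a
    have main : 1 ≤ (HH ((ψ * a) (X 1))).natDegree ∧
        (HH ((ψ * a) (X 0))).natDegree ≤ (HH ((ψ * a) (X 1))).natDegree := by
      by_cases h1 : ψ = 1
      · subst h1
        have e0 : (1 : P3 K ≃ₐ[K] P3 K) * a = a := one_mul a
        rw [e0]
        obtain ⟨hd1, hd0⟩ := affine_deg ⟨ha2, q11, q12, q13, q21, q22, q23, k, hk, hdet,
          ha0, ha1⟩
        exact ⟨hd1 ▸ le_rfl, hd1 ▸ hd0⟩
      · have hTS : TState ψ := ih.resolve_left h1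
        obtain ⟨_, e, d, c, he, hd, hcne, hge, hfd, hflc⟩ := hTS
        have hnT : a ∉ SetT K := hcnd.resolve_left h1
        have hq21 : q21 ≠ 0 := by
          intro h0
          rw [h0] at hdet ha1
          exact hnT (mem_T_of_A_q21_zero hk ha2 hdet ha0 ha1)
        have hi1 : (ψ * a) (X 1) = toZ K q21 * ψ (X 0) + toZ K q22 * ψ (X 1) + toZ K q23 :=
          mul_image_affine' hψ2 ha1
        have hi0 : (ψ * a) (X 0) = toZ K q11 * ψ (X 0) + toZ K q12 * ψ (X 1) + toZ K q13 :=
          mul_image_affine hψ2 ha0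
        have hede : e < d * e :=
          lt_of_lt_of_le (by omega : e < 2 * e) (Nat.mul_le_mul_right e hd)
        have h1de : 1 ≤ d * e := le_trans he (Nat.le_mul_of_pos_left e (by omega : 0 < d))
        have hA1 : (HH (toZ K q21 * ψ (X 0))).natDegree = d * e := by
          rw [map_mul, HH_toZ, Polynomial.natDegree_C_mul (toZ_ne_zero hq21), hfd]
        have hB1 : (HH (toZ K q22 * ψ (X 1))).natDegree ≤ e := by
          rw [map_mul, HH_toZ]
          exact le_trans (Polynomial.natDegree_C_mul_le _ _) (le_of_eq hge)
        have hC1 : (HH ((toZ K q23 : P3 K))).natDegree = 0 := by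
          rw [HH_toZ, Polynomial.natDegree_C]
        have hlt1 : (HH (toZ K q22 * ψ (X 1))).natDegree <
            (HH (toZ K q21 * ψ (X 0))).natDegree := by
          rw [hA1]; exact lt_of_le_of_lt hB1 hede
        obtain ⟨s1d, _⟩ := dominant_add hlt1
        have hlt2 : (HH ((toZ K q23 : P3 K))).natDegree <
            (HH (toZ K q21 * ψ (X 0)) + HH (toZ K q22 * ψ (X 1))).natDegree := by
          rw [s1d, hA1, hC1]; exact lt_of_lt_of_le Nat.zero_lt_one h1de
        obtain ⟨s2d, _⟩ := dominant_add hlt2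
        have hdeg1 : (HH ((ψ * a) (X 1))).natDegree = d * e := by
          rw [hi1, map_add, map_add, s2d, s1d, hA1]
        have b1 : (HH (toZ K q11 * ψ (X 0))).natDegree ≤ d * e := by
          rw [map_mul, HH_toZ]
          exact le_trans (Polynomial.natDegree_C_mul_le _ _) (le_of_eq hfd)
        have b2 : (HH (toZ K q12 * ψ (X 1))).natDegree ≤ d * e := by
          rw [map_mul, HH_toZ]
          exact le_trans (Polynomial.natDegree_C_mul_le _ _)
            (le_trans (le_of_eq hge) (le_of_lt hede))
        have b3 : (HH ((toZ K q13 : P3 K))).natDegree ≤ d * e := by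
          rw [HH_toZ, Polynomial.natDegree_C]
          exact Nat.zero_le _
        have hdeg0 : (HH ((ψ * a) (X 0))).natDegree ≤ d * e := by
          rw [hi0, map_add, map_add]
          exact le_trans (Polynomial.natDegree_add_le _ _) (max_le (le_trans
            (Polynomial.natDegree_add_le _ _) (max_le b1 b2)) b3)
        exact ⟨hdeg1 ▸ h1de, hdeg1 ▸ hdeg0⟩
    exact stepT hσ2 hat hbt ht2 ht0 ht1 hdq main.1 main.2

lemma appendT {ψ u : P3 K ≃ₐ[K] P3 K} (hW : IsW ψ) (hu : u ∈ SetT K)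
    (huA : u ∉ SetA K) :
    ∃ ψ' a', IsW ψ' ∧ a' ∈ SetA K ∧ ψ * u = ψ' * a' := by
  cases hW with
  | one =>
    exact ⟨1 * 1 * u, 1, IsW.cons IsW.one one_mem_A hu huA (Or.inl rfl), one_mem_A,
      by group⟩
  | @cons ψ₀ a₀ t₀ hW0 hA0 hT0 hTA0 hcnd0 =>
    by_cases hAcase : t₀ * u ∈ SetA K
    · exact ⟨ψ₀, a₀ * (t₀ * u), hW0, mul_mem_A hA0 hAcase, by group⟩
    · exact ⟨ψ₀ * a₀ * (t₀ * u), 1,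
        IsW.cons hW0 hA0 (mul_mem_T hT0 hu) hAcase hcnd0, one_mem_A, by group⟩

lemma good_step {φ v : P3 K ≃ₐ[K] P3 K}
    (hφ : ∃ ψ a, IsW ψ ∧ a ∈ SetA K ∧ φ = ψ * a) (hv : v ∈ SetA K ∪ SetT K) :
    ∃ ψ a, IsW ψ ∧ a ∈ SetA K ∧ φ * v = ψ * a := by
  obtain ⟨ψ, a, hW, hA, rfl⟩ := hφ
  by_cases hvA : v ∈ SetA K
  · exact ⟨ψ, a * v, hW, mul_mem_A hA hvA, by group⟩
  · have hvT : v ∈ SetT K := hv.resolve_left hvA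
    by_cases haT : a ∈ SetT K
    · have huT : a * v ∈ SetT K := mul_mem_T haT hvT
      have huA : a * v ∉ SetA K := by
        intro huA
        apply hvA
        have : a⁻¹ * (a * v) = v := by group
        rw [← this]
        exact mul_mem_A (inv_mem_A hA) huA
      obtain ⟨ψ', a', hW', hA', heq⟩ := appendT hW huT huA
      exact ⟨ψ', a', hW', hA', by rw [← heq]; group⟩
    · exact ⟨ψ * a * v, 1, IsW.cons hW hA hvT hvA (Or.inr haT), one_mem_A, by group⟩

lemma good_of_closure {φ : P3 K ≃ₐ[K] P3 K}
    (h : φ ∈ Subgroup.closure (SetA K ∪ SetT K)) :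
    ∃ ψ a, IsW ψ ∧ a ∈ SetA K ∧ φ = ψ * a := by
  have hsub : φ ∈ Submonoid.closure ((SetA K ∪ SetT K) ∪ (SetA K ∪ SetT K)⁻¹) := by
    rw [← Subgroup.closure_toSubmonoid]
    exact h
  obtain ⟨l, hl, rfl⟩ := Submonoid.exists_list_of_mem_closure hsub
  clear hsub h
  induction l using List.reverseRecOn with
  | nil => exact ⟨1, 1, IsW.one, one_mem_A, by simp⟩
  | append_singleton l v ih =>
    have hv : v ∈ SetA K ∪ SetT K := by
      have := hl v (by simp)
      rcases this with h | h
      · exact h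
      · rcases h with h | h
        · exact Or.inl (by simpa using inv_mem_A (by simpa using h : v⁻¹ ∈ SetA K))
        · exact Or.inr (by simpa using inv_mem_T (by simpa using h : v⁻¹ ∈ SetT K))
    have ih' := ih (fun y hy => hl y (by simp [hy]))
    rw [List.prod_append, List.prod_singleton]
    exact good_step ih' hv

lemma lc_toZ_mul (q : Polynomial K) (f : P3 K) :
    (HH (toZ K q * f)).leadingCoeff = toZ K q * (HH f).leadingCoeff := by
  rw [map_mul, HH_toZ, Polynomial.leadingCoeff_mul, Polynomial.leadingCoeff_C]

lemma dom3 {f g : P3 K} {q1 q2 q3 : Polynomial K} (hq1 : q1 ≠ 0)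
    (hlt : (HH g).natDegree < (HH f).natDegree) :
    (HH (toZ K q1 * f + toZ K q2 * g + toZ K q3)).natDegree = (HH f).natDegree ∧
      (HH (toZ K q1 * f + toZ K q2 * g + toZ K q3)).leadingCoeff =
        toZ K q1 * (HH f).leadingCoeff := by
  have hA : (HH (toZ K q1 * f)).natDegree = (HH f).natDegree := by
    rw [map_mul, HH_toZ, Polynomial.natDegree_C_mul (toZ_ne_zero hq1)]
  have hB : (HH (toZ K q2 * g)).natDegree ≤ (HH g).natDegree := by
    rw [map_mul, HH_toZ]
    exact Polynomial.natDegree_C_mul_le _ _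
  have hlt1 : (HH (toZ K q2 * g)).natDegree < (HH (toZ K q1 * f)).natDegree := by
    rw [hA]; exact lt_of_le_of_lt hB hlt
  obtain ⟨s1d, s1l⟩ := dominant_add hlt1
  have hlt2 : (HH ((toZ K q3 : P3 K))).natDegree <
      (HH (toZ K q1 * f) + HH (toZ K q2 * g)).natDegree := by
    rw [s1d, hA, HH_toZ, Polynomial.natDegree_C]
    omega
  obtain ⟨s2d, s2l⟩ := dominant_add hlt2
  constructor
  · rw [map_add, map_add, s2d, s1d, hA]
  · rw [map_add, map_add, s2l, s1l, lc_toZ_mul]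

variable (K)

/-- the polynomial `w = y² + xz`. -/
def Wp : P3 K := X 1 ^ 2 + X 0 * X 2

/-- components of the Nagata automorphism and its inverse. -/
def nF : P3 K := X 0 - 2 * X 1 * (X 1 ^ 2 + X 0 * X 2) - X 2 * (X 1 ^ 2 + X 0 * X 2) ^ 2
def nG : P3 K := X 1 + X 2 * (X 1 ^ 2 + X 0 * X 2)
def nFi : P3 K := X 0 + 2 * X 1 * (X 1 ^ 2 + X 0 * X 2) - X 2 * (X 1 ^ 2 + X 0 * X 2) ^ 2
def nGi : P3 K := X 1 - X 2 * (X 1 ^ 2 + X 0 * X 2)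

/-- the Nagata automorphism as an algebra map, and its inverse. -/
def Nh : P3 K →ₐ[K] P3 K := aeval ![nF K, nG K, X 2]
def Nhi : P3 K →ₐ[K] P3 K := aeval ![nFi K, nGi K, X 2]

lemma Nh_comp_Nhi : (Nh K).comp (Nhi K) = AlgHom.id K (P3 K) := by
  apply MvPolynomial.algHom_ext
  intro i
  fin_cases i <;>
    simp only [Fin.zero_eta, Fin.mk_one, Fin.reduceFinMk, AlgHom.coe_comp,
      Function.comp_apply, AlgHom.coe_id, id_eq, Nh, Nhi,
      nF, nG, nFi, nGi, aeval_X, map_add, map_sub, map_mul, map_pow, map_ofNat,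
      Matrix.cons_val_zero, Matrix.cons_val_one, Matrix.head_cons,
      Matrix.cons_val_two, Matrix.tail_cons] <;>
    ring

lemma Nhi_comp_Nh : (Nhi K).comp (Nh K) = AlgHom.id K (P3 K) := by
  apply MvPolynomial.algHom_ext
  intro i
  fin_cases i <;>
    simp only [Fin.zero_eta, Fin.mk_one, Fin.reduceFinMk, AlgHom.coe_comp,
      Function.comp_apply, AlgHom.coe_id, id_eq, Nh, Nhi,
      nF, nG, nFi, nGi, aeval_X, map_add, map_sub, map_mul, map_pow, map_ofNat,
      Matrix.cons_val_zero, Matrix.cons_val_one, Matrix.head_cons,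
      Matrix.cons_val_two, Matrix.tail_cons] <;>
    ring

/-- the Nagata automorphism. -/
def Nu : P3 K ≃ₐ[K] P3 K := AlgEquiv.ofAlgHom (Nh K) (Nhi K) (Nh_comp_Nhi K) (Nhi_comp_Nh K)

lemma Nu_X0 : Nu K (X 0) = nF K := by simp [Nu, Nh, nF]
lemma Nu_X1 : Nu K (X 1) = nG K := by simp [Nu, Nh, nG]
lemma Nu_X2 : Nu K (X 2) = X 2 := by simp [Nu, Nh]

variable {K}

lemma lead_top {P Q : Polynomial (P3 K)} {n : ℕ} {bb : P3 K} (hb : bb ≠ 0)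
    (hQ : Q.natDegree < n) (h : P = Q + Polynomial.C bb * Polynomial.X ^ n) :
    P.natDegree = n ∧ P.leadingCoeff = bb := by
  have hF : (Polynomial.C bb * Polynomial.X ^ n).natDegree = n :=
    Polynomial.natDegree_C_mul_X_pow n bb hb
  obtain ⟨hd, hl⟩ := dominant_add (F := Polynomial.C bb * Polynomial.X ^ n) (G := Q)
    (by rw [hF]; exact hQ)
  have hPF : P = Polynomial.C bb * Polynomial.X ^ n + Q := by rw [h, add_comm]
  refine ⟨?_, ?_⟩
  · rw [hPF, hd, hF]
  · rw [hPF, hl, Polynomial.leadingCoeff_C_mul_X_pow]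

lemma X2X12_ne : (X 2 * X 1 ^ 2 : P3 K) ≠ 0 :=
  mul_ne_zero (X_ne_zero _) (pow_ne_zero _ (X_ne_zero _))

lemma X2X14_ne : (-(X 2 * X 1 ^ 4) : P3 K) ≠ 0 :=
  neg_ne_zero.mpr (mul_ne_zero (X_ne_zero _) (pow_ne_zero _ (X_ne_zero _)))

lemma deg_nG : (HH (nG K)).natDegree = 2 ∧ (HH (nG K)).leadingCoeff = X 2 * X 1 ^ 2 := by
  have eG : HH (nG K) = Polynomial.C (X 1 + X 0 * X 2 ^ 2) * Polynomial.X +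
      Polynomial.C (X 2 * X 1 ^ 2) * Polynomial.X ^ 2 := by
    simp only [nG, map_add, map_mul, map_pow, HH_X0, HH_X1, HH_X2, Polynomial.C_add,
      Polynomial.C_mul, Polynomial.C_pow]
    ring
  refine lead_top X2X12_ne ?_ eG
  calc (Polynomial.C ((X 1 : P3 K) + X 0 * X 2 ^ 2) * Polynomial.X).natDegree
      ≤ Polynomial.X.natDegree := Polynomial.natDegree_C_mul_le _ _
    _ < 2 := by rw [Polynomial.natDegree_X]; omega

lemma deg_nF : (HH (nF K)).natDegree = 4 ∧ (HH (nF K)).leadingCoeff = -(X 2 * X 1 ^ 4) := by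
  have eF : HH (nF K) = (Polynomial.C (X 0) * Polynomial.X +
      Polynomial.C (-(2 * X 0 * X 1 * X 2) - X 0 ^ 2 * X 2 ^ 3) * Polynomial.X ^ 2 +
      Polynomial.C (-(2 * X 1 ^ 3) - 2 * X 0 * X 1 ^ 2 * X 2 ^ 2) * Polynomial.X ^ 3) +
      Polynomial.C (-(X 2 * X 1 ^ 4)) * Polynomial.X ^ 4 := by
    simp only [nF, map_add, map_sub, map_mul, map_pow, map_ofNat, HH_X0, HH_X1, HH_X2,
      Polynomial.C_add, Polynomial.C_sub, Polynomial.C_mul, Polynomial.C_pow,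
      Polynomial.C_neg]
    push_cast
    ring
  refine lead_top X2X14_ne ?_ eF
  have b1 : (Polynomial.C (X 0 : P3 K) * Polynomial.X).natDegree ≤ 3 :=
    le_trans (Polynomial.natDegree_C_mul_le _ _) (by rw [Polynomial.natDegree_X]; omega)
  have b2 : (Polynomial.C (-(2 * (X 0 : P3 K) * X 1 * X 2) - X 0 ^ 2 * X 2 ^ 3) *
      Polynomial.X ^ 2).natDegree ≤ 3 :=
    le_trans (Polynomial.natDegree_C_mul_le _ _) (by rw [Polynomial.natDegree_X_pow]; omega)
  have b3 : (Polynomial.C (-(2 * (X 1 : P3 K) ^ 3) - 2 * X 0 * X 1 ^ 2 * X 2 ^ 2) *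
      Polynomial.X ^ 3).natDegree ≤ 3 :=
    le_trans (Polynomial.natDegree_C_mul_le _ _) (by rw [Polynomial.natDegree_X_pow])
  calc (Polynomial.C (X 0 : P3 K) * Polynomial.X +
      Polynomial.C (-(2 * X 0 * X 1 * X 2) - X 0 ^ 2 * X 2 ^ 3) * Polynomial.X ^ 2 +
      Polynomial.C (-(2 * X 1 ^ 3) - 2 * X 0 * X 1 ^ 2 * X 2 ^ 2) *
        Polynomial.X ^ 3).natDegree
      ≤ 3 := le_trans (Polynomial.natDegree_add_le _ _)
        (max_le (le_trans (Polynomial.natDegree_add_le _ _) (max_le b1 b2)) b3)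
    _ < 4 := by omega

theorem nu_wild : Nu K ∉ Subgroup.closure (SetA K ∪ SetT K) := by
  intro h
  obtain ⟨ψ, a, hW, hA, heq⟩ := good_of_closure h
  obtain ⟨ha2, q11, q12, q13, q21, q22, q23, k, hk, hdet, ha0, ha1⟩ := hA
  have hψ2 : ψ (X 2) = X 2 := isW_fix2 hW
  obtain ⟨hdG, hlG⟩ := deg_nG (K := K)
  obtain ⟨hdF, hlF⟩ := deg_nF (K := K)
  have hi0 : nF K = toZ K q11 * ψ (X 0) + toZ K q12 * ψ (X 1) + toZ K q13 := by
    rw [← Nu_X0 K, heq]; exact mul_image_affine hψ2 ha0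
  have hi1 : nG K = toZ K q21 * ψ (X 0) + toZ K q22 * ψ (X 1) + toZ K q23 := by
    rw [← Nu_X1 K, heq]; exact mul_image_affine' hψ2 ha1
  rcases tstate_of_isW hW with h1 | hTS
  · -- ψ = 1 : ν would be affine
    subst h1
    simp only [AlgEquiv.one_apply] at hi1
    have hle : (HH (nG K)).natDegree ≤ 1 := by
      rw [hi1, HH_affine]
      exact Polynomial.natDegree_linear_le
    omega
  · obtain ⟨_, e, d, c, he, hd, hcne, hge, hfd, hflc⟩ := hTS
    have hede : e < d * e :=
      lt_of_lt_of_le (by omega : e < 2 * e) (Nat.mul_le_mul_right e hd)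
    have hlt : (HH (ψ (X 1))).natDegree < (HH (ψ (X 0))).natDegree := by
      rw [hge, hfd]; exact hede
    by_cases hq21 : q21 = 0
    · -- upper triangular case
      rw [hq21] at hi1 hdet
      rw [mul_zero, sub_zero] at hdet
      obtain ⟨u, v, hu, hv, hq11, hq22⟩ := eq_C_of_mul_eq_C hk hdet
      rw [map_zero, zero_mul, zero_add] at hi1
      -- degree of nG
      have hq22ne : q22 ≠ 0 := by rw [hq22]; exact fun h0 => hv (by simpa using h0)
      have hq11ne : q11 ≠ 0 := by rw [hq11]; exact fun h0 => hu (by simpa using h0)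
      have hAe : (HH (toZ K q22 * ψ (X 1))).natDegree = e := by
        rw [map_mul, HH_toZ, Polynomial.natDegree_C_mul (toZ_ne_zero hq22ne), hge]
      have hlt0 : (HH ((toZ K q23 : P3 K))).natDegree <
          (HH (toZ K q22 * ψ (X 1))).natDegree := by
        rw [hAe, HH_toZ, Polynomial.natDegree_C]; omega
      obtain ⟨sd, sl⟩ := dominant_add hlt0
      have hge2 : e = 2 := by
        have : (HH (nG K)).natDegree = e := by
          rw [hi1, map_add, sd, hAe]
        omega
      have hlcg : (X 2 * X 1 ^ 2 : P3 K) = toZ K q22 * (HH (ψ (X 1))).leadingCoeff := by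
        rw [← hlG, hi1, map_add, sl, lc_toZ_mul]
      -- degree and leading coefficient of nF
      obtain ⟨fd, fl⟩ := dom3 hq11ne hlt
      rw [← hi0] at fd fl
      have hd2 : d = 2 := by
        rw [hdF, hfd, hge2] at fd
        omega
      have hlcf : (-(X 2 * X 1 ^ 4) : P3 K) =
          toZ K q11 * (toZ K c * (HH (ψ (X 1))).leadingCoeff ^ 2) := by
        rw [← hlF, fl, hflc, hd2]
      -- project to K[z][x := 0, y := 1]
      set w : Polynomial K := piX 1 ((HH (ψ (X 1))).leadingCoeff) with hw
      have e1' : Polynomial.X = Polynomial.C v * w := by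
        have := congrArg (piX 1) hlcg
        simp only [map_mul, map_pow, piX_toZ 1 (by decide), hq22] at this
        rw [show piX (K := K) 1 (X 2) = Polynomial.X from by simp [piX],
          show piX (K := K) 1 (X 1) = 1 from by simp [piX]] at this
        simpa using this
      have e2' : -Polynomial.X = Polynomial.C u * (c * w ^ 2) := by
        have := congrArg (piX 1) hlcf
        simp only [map_neg, map_mul, map_pow, piX_toZ 1 (by decide), hq11] at this
        rw [show piX (K := K) 1 (X 2) = Polynomial.X from by simp [piX],
          show piX (K := K) 1 (X 1) = 1 from by simp [piX]] at this
        simpa using this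
      have e3 : -(Polynomial.C v ^ 2 * Polynomial.X) =
          Polynomial.C u * c * Polynomial.X ^ 2 := by
        linear_combination (Polynomial.C v ^ 2) * e2' -
          Polynomial.C u * c * (Polynomial.X + Polynomial.C v * w) * e1'
      rw [← Polynomial.C_pow] at e3
      have hc1 := congrArg (fun p => Polynomial.coeff p 1) e3
      simp only [Polynomial.coeff_neg, Polynomial.coeff_C_mul, Polynomial.coeff_X_one,
        mul_one, Polynomial.coeff_mul_X_pow'] at hc1
      rw [if_neg (by omega)] at hc1
      exact hv (pow_eq_zero_iff (n := 2) (by omega) |>.mp (neg_eq_zero.mp hc1))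
    · -- q21 ≠ 0 : the degrees collapse
      obtain ⟨gd, _⟩ := dom3 hq21 hlt
      rw [← hi1] at gd
      have hde2 : d * e = 2 := by rw [← hfd, ← gd, hdG]
      have he1 : e = 1 ∧ d = 2 := by
        rcases Nat.lt_or_ge e 2 with h' | h'
        · constructor
          · omega
          · have : e = 1 := by omega
            rw [this, mul_one] at hde2
            omega
        · have : 4 ≤ d * e := le_trans (by omega : 4 ≤ 2 * 2) (Nat.mul_le_mul hd h')
          omega
      by_cases hq11 : q11 = 0
      · rw [hq11, map_zero, zero_mul, zero_add] at hi0
        have : (HH (nF K)).natDegree ≤ e := by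
          rw [hi0, map_add]
          refine le_trans (Polynomial.natDegree_add_le _ _) (max_le ?_ ?_)
          · rw [map_mul, HH_toZ]
            exact le_trans (Polynomial.natDegree_C_mul_le _ _) (le_of_eq hge)
          · rw [HH_toZ, Polynomial.natDegree_C]
            exact Nat.zero_le _
        omega
      · obtain ⟨fd, _⟩ := dom3 hq11 hlt
        rw [← hi0] at fd
        rw [hdF, hfd] at fd
        omega

/-- conversion `K[y,z] → (K[z])[y]`. -/
def Theta : MvPolynomial (Fin 2) K →ₐ[K] Polynomial (Polynomial K) :=
  aeval ![Polynomial.X, Polynomial.C Polynomial.X]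

lemma EvT_Theta (p : MvPolynomial (Fin 2) K) :
    EvT (X 1 : P3 K) (Theta p) = aeval ![X 1, X 2] p := by
  induction p using MvPolynomial.induction_on with
  | C a =>
    rw [show Theta (C a) = Polynomial.C (Polynomial.C a) from by simp [Theta,
      MvPolynomial.algebraMap_eq, Polynomial.algebraMap_apply], EvT_CP, toZ_C]
    simp [MvPolynomial.algebraMap_eq]
  | add p q hp hq => rw [map_add, EvT_add, hp, hq, map_add]
  | mul_X p i hp =>
    rw [map_mul, EvT_mul, hp, map_mul]
    congr 1
    fin_cases i <;> simp only [Fin.zero_eta, Fin.mk_one, Fin.isValue, id_eq]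
    · rw [show Theta (X 0 : MvPolynomial (Fin 2) K) = Polynomial.X from by simp [Theta]]
      simp
    · rw [show Theta (X 1 : MvPolynomial (Fin 2) K) = Polynomial.C Polynomial.X from by
        simp [Theta]]
      simp


lemma memA_of_isZAffine {φ : P3 K ≃ₐ[K] P3 K} (h : IsZAffine K φ) : φ ∈ SetA K := by
  obtain ⟨h2, a, b, hdet, h0, h1⟩ := h
  refine ⟨h2, Polynomial.C (a 0 0), Polynomial.C (a 1 0), b 0,
    Polynomial.C (a 0 1), Polynomial.C (a 1 1), b 1, a.det, hdet.ne_zero, ?_, ?_, ?_⟩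
  · rw [← Polynomial.C_mul, ← Polynomial.C_mul, ← Polynomial.C_sub, Matrix.det_fin_two]
    exact congrArg Polynomial.C (by ring)
  · rw [h0, toZ_C, toZ_C]; rfl
  · rw [h1, toZ_C, toZ_C]; rfl

lemma memT_of_isZTriangular {φ : P3 K ≃ₐ[K] P3 K} (h : IsZTriangular K φ) :
    φ ∈ SetT K := by
  obtain ⟨h2, α₁, α₂, p₁, p₂, h0, h1⟩ := h
  exact ⟨h2, (α₁ : K), (α₂ : K), Theta p₁, p₂, α₁.ne_zero, α₂.ne_zero,
    by rw [h0, EvT_Theta], by rw [h1]; rfl⟩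

end NagataAux


/-- The Nagata automorphism is `z`-wild. -/
theorem nagata_is_z_wild :
    ∃ ν : MvPolynomial (Fin 3) K ≃ₐ[K] MvPolynomial (Fin 3) K,
      (ν (X 0) = X 0 - 2 * X 1 * (X 1 ^ 2 + X 0 * X 2) - X 2 * (X 1 ^ 2 + X 0 * X 2) ^ 2 ∧
       ν (X 1) = X 1 + X 2 * (X 1 ^ 2 + X 0 * X 2) ∧
       ν (X 2) = X 2) ∧
      ν ∉ ZTame K := by
  refine ⟨NagataAux.Nu K, ⟨?_, ?_, ?_⟩, ?_⟩
  · rw [NagataAux.Nu_X0]; rfl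
  · rw [NagataAux.Nu_X1]; rfl
  · exact NagataAux.Nu_X2 K
  · intro hmem
    refine NagataAux.nu_wild (K := K) ?_
    refine Subgroup.closure_mono ?_ hmem
    rintro φ (h | h)
    · exact Or.inl (NagataAux.memA_of_isZAffine h)
    · exact Or.inr (NagataAux.memT_of_isZTriangular h)
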